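/- Let n ≥ 1, m > 0, p ∈ [0,1]^n and q ∈ (0,1)^n. Let W_1, ..., W_n be independent random variables with W_i distributed as Poisson(m·p_i), and set W = ∑_{i=1}^n ((W_i − m·q_i)² − W_i)/(q_i(1 − q_i)). Then E[W] = m²·∑_{i=1}^n (p_i − q_i)²/(q_i(1 − q_i)). -/

import Mathlib

open MeasureTheory ProbabilityTheory

/-- The Poisson probability mass function with rate `lam`. -/
noncomputable def poissonPMF (lam : ℝ) (k : ℕ) : ℝ :=
  Real.exp (-lam) * lam ^ k / (Nat.factorial k)

lemma poissonPMF_nonneg {lam : ℝ} (hlam : 0 ≤ lam) (k : ℕ) : 0 ≤ _root_.poissonPMF lam k := by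
  unfold _root_.poissonPMF
  positivity

lemma poissonPMF_hasSum0 {lam : ℝ} (hlam : 0 ≤ lam) :
    HasSum (fun k => _root_.poissonPMF lam k) 1 := by
  have h := ProbabilityTheory.poissonPMFRealSum lam.toNNReal
  have he : (fun k => ProbabilityTheory.poissonPMFReal lam.toNNReal k)
      = fun k => _root_.poissonPMF lam k := by
    funext k
    simp [ProbabilityTheory.poissonPMFReal, _root_.poissonPMF, Real.coe_toNNReal lam hlam]
  rw [← he]; exact h

lemma poissonPMF_succ (lam : ℝ) (k : ℕ) :
    _root_.poissonPMF lam (k + 1) * ((k : ℝ) + 1) = lam * _root_.poissonPMF lam k := by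
  unfold _root_.poissonPMF
  rw [Nat.factorial_succ, pow_succ]
  push_cast
  have hk : (Nat.factorial k : ℝ) ≠ 0 := by positivity
  field_simp

lemma poissonPMF_hasSum1 {lam : ℝ} (hlam : 0 ≤ lam) :
    HasSum (fun k : ℕ => (k : ℝ) * _root_.poissonPMF lam k) lam := by
  have h0 := (poissonPMF_hasSum0 hlam).mul_left lam
  have he : (fun k : ℕ => ((k + 1 : ℕ) : ℝ) * _root_.poissonPMF lam (k + 1))
      = fun k => lam * _root_.poissonPMF lam k := by
    funext k
    push_cast
    rw [mul_comm]
    exact poissonPMF_succ lam k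
  have h : HasSum (fun k : ℕ => ((k + 1 : ℕ) : ℝ) * _root_.poissonPMF lam (k + 1)) (lam * 1) := by
    rw [he]; exact h0
  have h2 := (hasSum_nat_add_iff (f := fun k : ℕ => (k : ℝ) * _root_.poissonPMF lam k) 1).mp h
  simpa using h2

lemma poissonPMF_hasSum2 {lam : ℝ} (hlam : 0 ≤ lam) :
    HasSum (fun k : ℕ => (k : ℝ) * ((k : ℝ) - 1) * _root_.poissonPMF lam k) (lam ^ 2) := by
  have h0 := (poissonPMF_hasSum0 hlam).mul_left (lam ^ 2)
  have he : (fun k : ℕ => ((k + 2 : ℕ) : ℝ) * (((k + 2 : ℕ) : ℝ) - 1) * _root_.poissonPMF lam (k + 2))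
      = fun k => lam ^ 2 * _root_.poissonPMF lam k := by
    funext k
    push_cast
    have h1 := poissonPMF_succ lam (k + 1)
    have h2 := poissonPMF_succ lam k
    push_cast at h1
    calc ((k : ℝ) + 2) * ((k : ℝ) + 2 - 1) * _root_.poissonPMF lam (k + 2)
        = (_root_.poissonPMF lam (k + 1 + 1) * ((k + 1 : ℝ) + 1)) * ((k : ℝ) + 1) := by ring
      _ = lam * (_root_.poissonPMF lam (k + 1) * ((k : ℝ) + 1)) := by rw [h1]; ring
      _ = lam ^ 2 * _root_.poissonPMF lam k := by rw [h2]; ring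
  have h : HasSum (fun k : ℕ => ((k + 2 : ℕ) : ℝ) * (((k + 2 : ℕ) : ℝ) - 1)
      * _root_.poissonPMF lam (k + 2)) (lam ^ 2 * 1) := by
    rw [he]; exact h0
  have h2 := (hasSum_nat_add_iff
    (f := fun k : ℕ => (k : ℝ) * ((k : ℝ) - 1) * _root_.poissonPMF lam k) 2).mp h
  have hz : (∑ i ∈ Finset.range 2, (i : ℝ) * ((i : ℝ) - 1) * _root_.poissonPMF lam i) = 0 := by
    simp [Finset.sum_range_succ]
  rw [hz, add_zero, mul_one] at h2
  exact h2

lemma nat_sub_one_nonneg (k : ℕ) : 0 ≤ (k : ℝ) * ((k : ℝ) - 1) := by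
  rcases Nat.eq_zero_or_pos k with h | h
  · simp [h]
  · have h1 : (1 : ℝ) ≤ (k : ℝ) := by exact_mod_cast h
    nlinarith

lemma integrable_nat_of_hasSum {ν : Measure ℕ} {g : ℕ → ℝ} (hg : ∀ k, 0 ≤ g k) {s : ℝ}
    (h : HasSum (fun k => g k * (ν {k}).toReal) s) (hfin : ∀ k, ν {k} ≠ ⊤) :
    Integrable g ν := by
  refine ⟨(measurable_of_countable g).aestronglyMeasurable, ?_⟩
  rw [HasFiniteIntegral, lintegral_countable']
  have heq : ∀ k : ℕ, ‖g k‖ₑ * ν {k} = ENNReal.ofReal (g k * (ν {k}).toReal) := by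
    intro k
    rw [ENNReal.ofReal_mul (hg k), ENNReal.ofReal_toReal (hfin k)]
    congr 1
    rw [← Real.enorm_eq_ofReal (hg k)]
  simp_rw [heq]
  rw [← ENNReal.ofReal_tsum_of_nonneg (fun k => mul_nonneg (hg k) ENNReal.toReal_nonneg)
    h.summable]
  exact ENNReal.ofReal_lt_top

theorem stmt4 {Ω : Type*} [MeasurableSpace Ω] (μ : Measure Ω) [IsProbabilityMeasure μ]
    (n : ℕ) (hn : 1 ≤ n) (m : ℝ) (hm : 0 < m)
    (p q : Fin n → ℝ) (hp : ∀ i, p i ∈ Set.Icc (0:ℝ) 1) (hq : ∀ i, q i ∈ Set.Ioo (0:ℝ) 1)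
    (W : Fin n → Ω → ℕ) (hmeas : ∀ i, Measurable (W i))
    (hindep : iIndepFun W μ)
    (hlaw : ∀ i k, μ (W i ⁻¹' {k}) = ENNReal.ofReal (poissonPMF (m * p i) k)) :
    ∫ ω, (∑ i, (((W i ω : ℝ) - m * q i) ^ 2 - (W i ω : ℝ)) / (q i * (1 - q i))) ∂μ
      = m ^ 2 * ∑ i, (p i - q i) ^ 2 / (q i * (1 - q i)) := by
  have key : ∀ i : Fin n,
      Integrable (fun ω => (((W i ω : ℝ) - m * q i) ^ 2 - (W i ω : ℝ)) / (q i * (1 - q i))) μ ∧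
      ∫ ω, (((W i ω : ℝ) - m * q i) ^ 2 - (W i ω : ℝ)) / (q i * (1 - q i)) ∂μ
        = m ^ 2 * (p i - q i) ^ 2 / (q i * (1 - q i)) := by
    intro i
    set lam := m * p i with hlamdef
    have hlam : 0 ≤ lam := mul_nonneg hm.le (hp i).1
    set b := m * q i with hbdef
    set c := q i * (1 - q i) with hcdef
    set ν : Measure ℕ := μ.map (W i) with hνdef
    have hν : ∀ k : ℕ, ν {k} = ENNReal.ofReal (_root_.poissonPMF lam k) := by
      intro k
      rw [hνdef, Measure.map_apply (hmeas i) (MeasurableSet.singleton k)]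
      exact hlaw i k
    have hνfin : ∀ k : ℕ, ν {k} ≠ ⊤ := fun k => by rw [hν k]; exact ENNReal.ofReal_ne_top
    have hνtoReal : ∀ k : ℕ, (ν {k}).toReal = _root_.poissonPMF lam k := fun k => by
      rw [hν k, ENNReal.toReal_ofReal (poissonPMF_nonneg hlam k)]
    have hint0 : Integrable (fun _ : ℕ => (1 : ℝ)) ν := by
      apply integrable_nat_of_hasSum (fun k => zero_le_one) (s := 1) _ hνfin
      simp_rw [one_mul, hνtoReal]
      exact poissonPMF_hasSum0 hlam
    have hint1 : Integrable (fun k : ℕ => (k : ℝ)) ν := by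
      apply integrable_nat_of_hasSum (fun k => Nat.cast_nonneg k) (s := lam) _ hνfin
      simp_rw [hνtoReal]
      exact poissonPMF_hasSum1 hlam
    have hint2 : Integrable (fun k : ℕ => (k : ℝ) * ((k : ℝ) - 1)) ν := by
      apply integrable_nat_of_hasSum nat_sub_one_nonneg (s := lam ^ 2) _ hνfin
      simp_rw [hνtoReal]
      exact poissonPMF_hasSum2 hlam
    set f : ℕ → ℝ := fun k => (((k : ℝ) - b) ^ 2 - (k : ℝ)) / c with hfdef
    have hfeq : f = fun k : ℕ =>
        ((k : ℝ) * ((k : ℝ) - 1) - 2 * b * (k : ℝ) + b ^ 2 * 1) / c := by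
      funext k; rw [hfdef]; ring_nf
    have hintf : Integrable f ν := by
      rw [hfeq]
      exact (((hint2.sub (hint1.const_mul (2 * b))).add (hint0.const_mul (b ^ 2))).div_const c)
    have hsum : HasSum (fun k => (ν {k}).toReal • f k)
        ((lam ^ 2 - 2 * b * lam + b ^ 2 * 1) / c) := by
      have h := (((poissonPMF_hasSum2 hlam).sub ((poissonPMF_hasSum1 hlam).mul_left (2 * b))).add
        ((poissonPMF_hasSum0 hlam).mul_left (b ^ 2))).div_const c
      have he : (fun k : ℕ => (ν {k}).toReal • f k) = fun k : ℕ =>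
          ((k : ℝ) * ((k : ℝ) - 1) * _root_.poissonPMF lam k
            - 2 * b * ((k : ℝ) * _root_.poissonPMF lam k)
            + b ^ 2 * _root_.poissonPMF lam k) / c := by
        funext k
        rw [hνtoReal, hfeq]
        simp only [smul_eq_mul]
        ring
      rw [he]
      exact h
    have hval : ∫ k, f k ∂ν = (lam ^ 2 - 2 * b * lam + b ^ 2 * 1) / c := by
      rw [integral_countable' hintf]; exact hsum.tsum_eq
    have hmap : ∫ ω, f (W i ω) ∂μ = ∫ k, f k ∂ν := by
      rw [hνdef, integral_map (hmeas i).aemeasurable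
        (measurable_of_countable f).aestronglyMeasurable]
    have hintμ : Integrable (fun ω => f (W i ω)) μ :=
      (integrable_map_measure (measurable_of_countable f).aestronglyMeasurable
        (hmeas i).aemeasurable).mp (hνdef ▸ hintf)
    have hfinal : (lam ^ 2 - 2 * b * lam + b ^ 2 * 1) / c = m ^ 2 * (p i - q i) ^ 2 / c := by
      rw [hlamdef, hbdef]; ring_nf
    exact ⟨hintμ, by rw [show (fun ω => (((W i ω : ℝ) - m * q i) ^ 2 - (W i ω : ℝ))
      / (q i * (1 - q i))) = fun ω => f (W i ω) from rfl] at *; rw [hmap, hval, hfinal]⟩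
  rw [integral_finset_sum _ (fun i _ => (key i).1), Finset.mul_sum]
  refine Finset.sum_congr rfl fun i _ => ?_
  rw [(key i).2, mul_div_assoc]
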